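/- Let F : Θ ⊆ ℝ^d → ℝ be differentiable and strictly convex with ∇F a bijection from Θ onto its image. Define M_{∇F}(θ₁,…,θₙ; w) = (∇F)⁻¹(∑ᵢ wᵢ ∇F(θᵢ)) for weights w in the standard simplex. If A ∈ GL(d,ℝ), b ∈ ℝ^d, and F̄(x) = F(A⁻¹(x-b)) on AΘ + b, then the quasi-arithmetic average is equivariant: M_{∇F̄}(Aθ₁+b, …, Aθₙ+b; w) = A · M_{∇F}(θ₁,…,θₙ; w) + b. -/

import Mathlib

open RealInnerProductSpace

/-- Equivariance of quasi-arithmetic averages under affine reparameterization: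
with `F̄(x) = F(A⁻¹(x - b))` on `AΘ + b`, one has
`M_{∇F̄}(Aθ₁+b, …, Aθₙ+b; w) = A M_{∇F}(θ₁,…,θₙ; w) + b`, where
`M_{∇F}(θ₁,…,θₙ; w) = (∇F)⁻¹(∑ᵢ wᵢ ∇F(θᵢ))`. -/
theorem qaa_affine_equivariance {d n : ℕ}
    (Θ : Set (EuclideanSpace ℝ (Fin d))) (F : EuclideanSpace ℝ (Fin d) → ℝ)
    (hΘopen : IsOpen Θ) (hΘconv : Convex ℝ Θ)
    (hdiff : ∀ x ∈ Θ, DifferentiableAt ℝ F x)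
    (hconv : StrictConvexOn ℝ Θ F)
    (hinj : Set.InjOn (gradient F) Θ)
    (A : EuclideanSpace ℝ (Fin d) ≃L[ℝ] EuclideanSpace ℝ (Fin d))
    (b : EuclideanSpace ℝ (Fin d))
    (Fbar : EuclideanSpace ℝ (Fin d) → ℝ)
    (hFbar : ∀ x, Fbar x = F (A.symm (x - b)))
    (θ : Fin n → EuclideanSpace ℝ (Fin d)) (hθ : ∀ i, θ i ∈ Θ)
    (w : Fin n → ℝ) (hw : ∀ i, 0 ≤ w i) (hw1 : ∑ i, w i = 1)
    (hmean : (∑ i, w i • gradient F (θ i)) ∈ gradient F '' Θ) :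
    Function.invFunOn (gradient Fbar) ((fun x => A x + b) '' Θ)
        (∑ i, w i • gradient Fbar (A (θ i) + b)) =
      A (Function.invFunOn (gradient F) Θ (∑ i, w i • gradient F (θ i))) + b := by
  classical
  set B : EuclideanSpace ℝ (Fin d) →L[ℝ] EuclideanSpace ℝ (Fin d) :=
    ContinuousLinearMap.adjoint
      (A.symm : EuclideanSpace ℝ (Fin d) →L[ℝ] EuclideanSpace ℝ (Fin d)) with hB
  have hgrad : ∀ x ∈ Θ, gradient Fbar (A x + b) = B (gradient F x) := by
    intro x hx
    have hF : HasGradientAt F (gradient F x) x := (hdiff x hx).hasGradientAt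
    have hFd : HasFDerivAt F
        (InnerProductSpace.toDual ℝ (EuclideanSpace ℝ (Fin d)) (gradient F x)) x :=
      hasGradientAt_iff_hasFDerivAt.mp hF
    have hkey : A.symm (A x + b - b) = x := by simp
    have h1 : HasFDerivAt (fun z : EuclideanSpace ℝ (Fin d) => z - b)
        (ContinuousLinearMap.id ℝ (EuclideanSpace ℝ (Fin d))) (A x + b) :=
      (hasFDerivAt_id _).sub_const b
    have haff : HasFDerivAt (fun z : EuclideanSpace ℝ (Fin d) => A.symm (z - b))
        ((A.symm : EuclideanSpace ℝ (Fin d) →L[ℝ] EuclideanSpace ℝ (Fin d)).comp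
          (ContinuousLinearMap.id ℝ (EuclideanSpace ℝ (Fin d)))) (A x + b) :=
      A.symm.hasFDerivAt.comp (A x + b) h1
    have hFd' : HasFDerivAt F
        (InnerProductSpace.toDual ℝ (EuclideanSpace ℝ (Fin d)) (gradient F x))
        (A.symm (A x + b - b)) := by rw [hkey]; exact hFd
    have hcomp := hFd'.comp (A x + b) haff
    have hEq : (F ∘ fun z : EuclideanSpace ℝ (Fin d) => A.symm (z - b)) = Fbar := by
      funext z; exact (hFbar z).symm
    rw [hEq, ContinuousLinearMap.comp_id] at hcomp
    have hdual : (InnerProductSpace.toDual ℝ (EuclideanSpace ℝ (Fin d))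
          (gradient F x)).comp
          (A.symm : EuclideanSpace ℝ (Fin d) →L[ℝ] EuclideanSpace ℝ (Fin d)) =
        InnerProductSpace.toDual ℝ (EuclideanSpace ℝ (Fin d)) (B (gradient F x)) := by
      ext v
      simp [hB, ContinuousLinearMap.adjoint_inner_left, real_inner_comm]
    rw [hdual] at hcomp
    exact (hasGradientAt_iff_hasFDerivAt.mpr hcomp).gradient
  have hBinj : Function.Injective B := by
    intro u v huv
    apply ext_inner_right ℝ
    intro z
    have h1 : ∀ y : EuclideanSpace ℝ (Fin d), (inner ℝ y z : ℝ) = inner ℝ (B y) (A z) := by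
      intro y
      rw [hB, ContinuousLinearMap.adjoint_inner_left]
      simp
    rw [h1 u, h1 v, huv]
  have hinjbar : Set.InjOn (gradient Fbar) ((fun x => A x + b) '' Θ) := by
    rintro _ ⟨x, hx, rfl⟩ _ ⟨y, hy, rfl⟩ h
    rw [hgrad x hx, hgrad y hy] at h
    have := hinj hx hy (hBinj h)
    rw [this]
  obtain ⟨x₀, hx₀, hx₀eq⟩ := hmean
  set S := ∑ i, w i • gradient F (θ i) with hS
  set μ := Function.invFunOn (gradient F) Θ S with hμ
  have hμΘ : μ ∈ Θ := Function.invFunOn_mem ⟨x₀, hx₀, hx₀eq⟩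
  have hμeq : gradient F μ = S := Function.invFunOn_eq ⟨x₀, hx₀, hx₀eq⟩
  have hsum : (∑ i, w i • gradient Fbar (A (θ i) + b)) = B S := by
    rw [hS, map_sum]
    exact Finset.sum_congr rfl fun i _ => by rw [hgrad _ (hθ i), map_smul]
  have hval : gradient Fbar (A μ + b) = B S := by rw [hgrad μ hμΘ, hμeq]
  have hmem : A μ + b ∈ (fun x => A x + b) '' Θ := ⟨μ, hμΘ, rfl⟩
  calc Function.invFunOn (gradient Fbar) ((fun x => A x + b) '' Θ)
        (∑ i, w i • gradient Fbar (A (θ i) + b))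
      = Function.invFunOn (gradient Fbar) ((fun x => A x + b) '' Θ)
        (gradient Fbar (A μ + b)) := by rw [hsum, hval]
    _ = A μ + b := hinjbar.leftInvOn_invFunOn hmem
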